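/- Let t be a β-normal λ-term. Then ⊢_F t : Ent holds if and only if there exists n ∈ ℕ such that t is the Church numeral n̲. -/

import Mathlib

set_option maxHeartbeats 1000000


/-- Untyped λ-terms in de Bruijn representation. -/
inductive Trm : Type
  | var : ℕ → Trm
  | app : Trm → Trm → Trm
  | lam : Trm → Trm
  deriving DecidableEq

namespace Trm

/-- The set of free variables of a term (as de Bruijn indices). -/
def fv : Trm → Set ℕ
  | var n => {n}
  | app u v => fv u ∪ fv v
  | lam u => {n | n + 1 ∈ fv u}

/-- A term is closed if it has no free variables. -/
def Closed (t : Trm) : Prop := fv t = ∅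

/-- λI-terms: abstraction is allowed only on variables occurring free in the body. -/
inductive IsLI : Trm → Prop
  | var (n : ℕ) : IsLI (var n)
  | app {u v : Trm} : IsLI u → IsLI v → IsLI (app u v)
  | lam {u : Trm} : IsLI u → 0 ∈ fv u → IsLI (lam u)

/-- Lifting of free variables ≥ d. -/
def lift (d : ℕ) : Trm → Trm
  | var n => if n < d then var n else var (n + 1)
  | app u v => app (lift d u) (lift d v)
  | lam u => lam (lift (d + 1) u)

def liftTimes (k : ℕ) (t : Trm) : Trm := (lift 0)^[k] t

/-- Capture-avoiding substitution of the k-th free variable. -/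
def subst : Trm → ℕ → Trm → Trm
  | var n, k, v => if n < k then var n else if n = k then liftTimes k v else var (n - 1)
  | app a b, k, v => app (subst a k v) (subst b k v)
  | lam a, k, v => lam (subst a (k + 1) v)

end Trm

/-- One step of β-reduction. -/
inductive Beta : Trm → Trm → Prop
  | beta {u v : Trm} : Beta (.app (.lam u) v) (u.subst 0 v)
  | appL {u u' v : Trm} : Beta u u' → Beta (.app u v) (.app u' v)
  | appR {u v v' : Trm} : Beta v v' → Beta (.app u v) (.app u v')
  | lam {u u' : Trm} : Beta u u' → Beta (.lam u) (.lam u')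

/-- One step of η-reduction: λx (u)x → u when x ∉ Fv(u). -/
inductive Eta : Trm → Trm → Prop
  | eta (u : Trm) : Eta (.lam (.app (u.lift 0) (.var 0))) u
  | appL {u u' v : Trm} : Eta u u' → Eta (.app u v) (.app u' v)
  | appR {u v v' : Trm} : Eta v v' → Eta (.app u v) (.app u v')
  | lam {u u' : Trm} : Eta u u' → Eta (.lam u) (.lam u')

/-- β-reduction (reflexive-transitive closure). -/
def BetaStar : Trm → Trm → Prop := Relation.ReflTransGen Beta

/-- βη-reduction (reflexive-transitive closure of the union of β and η). -/
def BetaEtaStar : Trm → Trm → Prop := Relation.ReflTransGen (fun a b => Beta a b ∨ Eta a b)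

/-- η-reduction (reflexive-transitive closure). -/
def EtaStar : Trm → Trm → Prop := Relation.ReflTransGen Eta

/-- A term is β-normal iff it contains no β-redex. -/
def BetaNormal (t : Trm) : Prop := ∀ u, ¬ Beta t u

/-- A term is βη-normal iff it contains neither a β-redex nor an η-redex. -/
def BetaEtaNormal (t : Trm) : Prop := ∀ u, ¬ Beta t u ∧ ¬ Eta t u

/-- A term is strongly normalizable iff every β-reduction sequence from it is finite. -/
def StronglyNormalizable (t : Trm) : Prop :=
  ¬ ∃ f : ℕ → Trm, f 0 = t ∧ ∀ n, Beta (f n) (f (n + 1))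

/-- Body of a Church numeral: (f)ⁿ x with f = var 0, x = var 1. -/
def churchBody : ℕ → Trm
  | 0 => .var 1
  | n + 1 => .app (.var 0) (churchBody n)

/-- The Church numeral n̲ = λx λf (f)ⁿ x. -/
def church (n : ℕ) : Trm := .lam (.lam (churchBody n))

/-- Types of system F in de Bruijn representation. -/
inductive Ty : Type
  | var : ℕ → Ty
  | arr : Ty → Ty → Ty
  | all : Ty → Ty
  deriving DecidableEq

namespace Ty

/-- Free type variables. -/
def tfv : Ty → Set ℕ
  | var n => {n}
  | arr A B => tfv A ∪ tfv B
  | all A => {n | n + 1 ∈ tfv A}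

/-- Lifting of free type variables ≥ d. -/
def tlift (d : ℕ) : Ty → Ty
  | var n => if n < d then var n else var (n + 1)
  | arr A B => arr (tlift d A) (tlift d B)
  | all A => all (tlift (d + 1) A)

def tliftTimes (k : ℕ) (A : Ty) : Ty := (tlift 0)^[k] A

/-- Substitution of the k-th free type variable. -/
def tsubst : Ty → ℕ → Ty → Ty
  | var n, k, G => if n < k then var n else if n = k then tliftTimes k G else var (n - 1)
  | arr A B, k, G => arr (tsubst A k G) (tsubst B k G)
  | all A, k, G => all (tsubst A (k + 1) G)

/-- Proper types: in every subtype ∀X E, the variable X occurs free in E. -/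
def Proper : Ty → Prop
  | var _ => True
  | arr A B => Proper A ∧ Proper B
  | all A => Proper A ∧ 0 ∈ tfv A

/-- Closed types. -/
def ClosedTy (A : Ty) : Prop := tfv A = ∅

end Ty

/-- Typing judgments of system F (restricted to proper types:
the rule (∀e) requires X free in A and instantiates at proper types only). -/
inductive Typing : List Ty → Trm → Ty → Prop
  | ax {Γ : List Ty} {n : ℕ} {A : Ty} :
      Γ[n]? = some A → (∀ B ∈ Γ, B.Proper) → Typing Γ (.var n) A
  | arrI {Γ : List Ty} {A B : Ty} {t : Trm} :
      A.Proper → Typing (A :: Γ) t B → Typing Γ (.lam t) (.arr A B)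
  | arrE {Γ : List Ty} {A B : Ty} {u v : Trm} :
      Typing Γ u (.arr A B) → Typing Γ v A → Typing Γ (.app u v) B
  | allI {Γ : List Ty} {A : Ty} {t : Trm} :
      0 ∈ Ty.tfv A → Typing (Γ.map (Ty.tlift 0)) t A → Typing Γ t (.all A)
  | allE {Γ : List Ty} {A : Ty} {t : Trm} (G : Ty) :
      G.Proper → 0 ∈ Ty.tfv A → Typing Γ t (.all A) → Typing Γ t (A.tsubst 0 G)

/-- The type Ent = ∀X {X → [(X → X) → X]}. -/
def Ent : Ty := .all (.arr (.var 0) (.arr (.arr (.var 0) (.var 0)) (.var 0)))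

namespace StmtAux
open Trm

/-! ### Basic term lemmas -/

lemma liftTimes_var (k m : ℕ) : Trm.liftTimes k (.var m) = .var (m + k) := by
  induction k with
  | zero => rfl
  | succ k ih =>
    unfold Trm.liftTimes at *
    rw [Function.iterate_succ_apply', ih]
    simp [Trm.lift]
    omega

lemma lift_lift (t : Trm) : ∀ i j, i ≤ j → (t.lift j).lift i = (t.lift i).lift (j+1) := by
  induction t with
  | var n =>
    intro i j hij
    simp only [Trm.lift]
    split_ifs <;> simp only [Trm.lift] <;> split_ifs <;> first | rfl | omega | (exfalso; omega)
  | app u v ihu ihv => intro i j hij; simp [Trm.lift, ihu i j hij, ihv i j hij]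
  | lam u ih => intro i j hij; simp [Trm.lift, ih (i+1) (j+1) (by omega)]

lemma liftTimes_succ (t : Trm) (k : ℕ) :
    Trm.liftTimes (k+1) t = (Trm.liftTimes k t).lift 0 :=
  Function.iterate_succ_apply' _ _ _

lemma lift_liftTimes (t : Trm) : ∀ k j, j ≤ k → (Trm.liftTimes k t).lift j = Trm.liftTimes (k+1) t := by
  intro k
  induction k with
  | zero =>
    intro j hj; interval_cases j
    simp [Trm.liftTimes]
  | succ k ih =>
    intro j hj
    cases j with
    | zero => rw [liftTimes_succ t (k+1)]
    | succ j' =>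
      rw [liftTimes_succ t k, ← lift_lift _ 0 j' (Nat.zero_le _), ih j' (by omega),
        ← liftTimes_succ]

lemma lift_subst (t : Trm) : ∀ u j k, j ≤ k →
    (t.lift j).subst (k+1) u = (t.subst k u).lift j := by
  induction t with
  | var n =>
    intro u j k hjk
    simp only [Trm.lift, Trm.subst]
    rcases lt_trichotomy n k with h | rfl | h
    · split_ifs <;> simp only [Trm.subst, Trm.lift] <;> split_ifs <;> first | rfl | omega
    · have h1 : ¬ n < j ∨ n < j := by omega
      split_ifs <;> simp only [Trm.subst, Trm.lift] <;> split_ifs <;>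
        first | omega | (try rw [lift_liftTimes _ _ _ hjk])
    · split_ifs <;> simp only [Trm.subst, Trm.lift] <;> split_ifs <;>
        first | omega | (congr 1; omega)
  | app a b iha ihb => intro u j k hjk; simp [Trm.lift, Trm.subst, iha u j k hjk, ihb u j k hjk]
  | lam a ih => intro u j k hjk; simp [Trm.lift, Trm.subst, ih u (j+1) (k+1) (by omega)]

lemma subst_lift (t : Trm) : ∀ u k, (t.lift k).subst k u = t := by
  induction t with
  | var n =>
    intro u k
    simp only [Trm.lift]
    split_ifs <;> simp only [Trm.subst] <;> split_ifs <;> first | rfl | omega | (congr 1; omega)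
  | app a b iha ihb => intro u k; simp [Trm.lift, Trm.subst, iha, ihb]
  | lam a ih => intro u k; simp [Trm.lift, Trm.subst, ih]

/-! ### Simultaneous substitution -/

def upσ (σ : ℕ → Trm) : ℕ → Trm
  | 0 => .var 0
  | n+1 => (σ n).lift 0

def consσ (u : Trm) (σ : ℕ → Trm) : ℕ → Trm
  | 0 => u
  | n+1 => σ n

def msubst (σ : ℕ → Trm) : Trm → Trm
  | .var n => σ n
  | .app u v => .app (msubst σ u) (msubst σ v)
  | .lam u => .lam (msubst (upσ σ) u)

lemma msubst_subst (t : Trm) : ∀ (σ : ℕ → Trm) k u,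
    (msubst σ t).subst k u = msubst (fun n => (σ n).subst k u) t := by
  induction t with
  | var n => intro σ k u; rfl
  | app a b iha ihb => intro σ k u; simp [msubst, Trm.subst, iha, ihb]
  | lam a ih =>
    intro σ k u
    simp only [msubst, Trm.subst, ih]
    congr 1
    apply congrArg (fun σ' => msubst σ' a)
    funext n
    cases n with
    | zero => simp [upσ, Trm.subst]
    | succ n => simp [upσ, lift_subst _ u 0 k (Nat.zero_le _)]

lemma msubst_beta (t : Trm) (σ : ℕ → Trm) (u : Trm) :
    (msubst (upσ σ) t).subst 0 u = msubst (consσ u σ) t := by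
  rw [msubst_subst]
  apply congrArg (fun σ' => msubst σ' t)
  funext n
  cases n with
  | zero => simp [upσ, consσ, Trm.subst, Trm.liftTimes]
  | succ n => simp [upσ, consσ, subst_lift]

lemma msubst_id (t : Trm) : msubst (fun n => .var n) t = t := by
  induction t with
  | var n => rfl
  | app a b iha ihb => simp [msubst, iha, ihb]
  | lam a ih =>
    simp only [msubst]
    congr 1
    have : upσ (fun n => Trm.var n) = fun n => Trm.var n := by
      funext n; cases n <;> simp [upσ, Trm.lift]
    rw [this, ih]

/-! ### Semantics -/

def SAT (S : Set Trm) : Prop := ∀ ⦃t u : Trm⦄, Beta t u → u ∈ S → t ∈ S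

def consρ (S : Set Trm) (ρ : ℕ → Set Trm) : ℕ → Set Trm
  | 0 => S
  | n+1 => ρ n

def interpTy : Ty → (ℕ → Set Trm) → Set Trm
  | .var n, ρ => ρ n
  | .arr A B, ρ => {t | ∀ u ∈ interpTy A ρ, Trm.app t u ∈ interpTy B ρ}
  | .all A, ρ => ⋂ (S : Set Trm) (_ : SAT S), interpTy A (consρ S ρ)

lemma interp_ext {A : Ty} {ρ ρ' : ℕ → Set Trm} (h : ∀ n, ρ n = ρ' n) :
    interpTy A ρ = interpTy A ρ' := by
  have : ρ = ρ' := funext h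
  rw [this]

lemma interp_sat : ∀ (A : Ty) (ρ : ℕ → Set Trm), (∀ n, SAT (ρ n)) → SAT (interpTy A ρ) := by
  intro A
  induction A with
  | var n => intro ρ hρ; exact hρ n
  | arr A B ihA ihB =>
    intro ρ hρ t u hb hu v hv
    exact ihB ρ hρ (Beta.appL hb) (hu v hv)
  | all A ih =>
    intro ρ hρ t u hb hu
    simp only [interpTy, Set.mem_iInter] at hu ⊢
    intro S hS
    refine ih (consρ S ρ) ?_ hb (hu S hS)
    intro n; cases n with
    | zero => exact hS
    | succ n => exact hρ n

lemma interp_tlift : ∀ (A : Ty) (ρ : ℕ → Set Trm) (d : ℕ),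
    interpTy (A.tlift d) ρ = interpTy A (fun n => if n < d then ρ n else ρ (n+1)) := by
  intro A
  induction A with
  | var n => intro ρ d; simp only [Ty.tlift]; split_ifs <;> simp [interpTy] <;> first | (split_ifs <;> rfl) | (intro; omega)
  | arr A B ihA ihB => intro ρ d; simp only [Ty.tlift, interpTy, ihA, ihB]
  | all A ih =>
    intro ρ d
    simp only [Ty.tlift, interpTy]
    apply Set.iInter_congr; intro S
    apply Set.iInter_congr; intro _
    rw [ih]
    apply interp_ext
    intro n
    cases n with
    | zero => simp [consρ]
    | succ n => simp only [consρ]; split_ifs <;> first | rfl | omega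

lemma tliftTimes_succ (G : Ty) (k : ℕ) :
    Ty.tliftTimes (k+1) G = (Ty.tliftTimes k G).tlift 0 :=
  Function.iterate_succ_apply' _ _ _

lemma interp_tsubst : ∀ (A : Ty) (G : Ty) (ρ : ℕ → Set Trm) (k : ℕ),
    interpTy (A.tsubst k G) ρ =
      interpTy A (fun n => if n < k then ρ n else
        if n = k then interpTy (Ty.tliftTimes k G) ρ else ρ (n-1)) := by
  intro A
  induction A with
  | var n =>
    intro G ρ k
    simp only [Ty.tsubst]
    split_ifs <;> simp only [interpTy] <;> split_ifs <;> first | rfl | omega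
  | arr A B ihA ihB => intro G ρ k; simp only [Ty.tsubst, interpTy, ihA, ihB]
  | all A ih =>
    intro G ρ k
    simp only [Ty.tsubst, interpTy]
    apply Set.iInter_congr; intro S
    apply Set.iInter_congr; intro hS
    rw [ih]
    apply interp_ext
    intro n
    cases n with
    | zero => simp [consρ]
    | succ n =>
      simp only [consρ]
      have hG : interpTy (Ty.tliftTimes (k+1) G) (consρ S ρ) = interpTy (Ty.tliftTimes k G) ρ := by
        rw [tliftTimes_succ, interp_tlift]
        apply interp_ext
        intro m; simp [consρ]
      split_ifs <;>
        first
          | rfl | omega | (exact hG)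
          | (obtain ⟨m, rfl⟩ : ∃ m, n = m+1 := ⟨n-1, by omega⟩; simp [consρ])

/-! ### Soundness -/

theorem sound {Γ : List Ty} {t : Trm} {A : Ty} (h : Typing Γ t A) :
    ∀ (ρ : ℕ → Set Trm), (∀ n, SAT (ρ n)) →
    ∀ (σ : ℕ → Trm), (∀ i B, Γ[i]? = some B → σ i ∈ interpTy B ρ) →
    msubst σ t ∈ interpTy A ρ := by
  induction h with
  | @ax Γ n A hget _ =>
    intro ρ hρ σ hσ
    exact hσ n A hget
  | @arrI Γ A B t _ _ ih =>
    intro ρ hρ σ hσ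
    intro u hu
    have hstep : Beta (Trm.app (msubst σ (.lam t)) u) (msubst (consσ u σ) t) := by
      rw [← msubst_beta]
      exact Beta.beta
    refine interp_sat B ρ hρ hstep ?_
    apply ih ρ hρ (consσ u σ)
    intro i B' hget
    cases i with
    | zero => simp at hget; subst hget; exact hu
    | succ i => simp at hget; exact hσ i B' hget
  | @arrE Γ A B u v _ _ ihu ihv =>
    intro ρ hρ σ hσ
    exact ihu ρ hρ σ hσ _ (ihv ρ hρ σ hσ)
  | @allI Γ A t _ _ ih =>
    intro ρ hρ σ hσ
    simp only [interpTy, Set.mem_iInter]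
    intro S hS
    have hρ' : ∀ n, SAT ((consρ S ρ) n) := by
      intro n; cases n with
      | zero => exact hS
      | succ n => exact hρ n
    apply ih (consρ S ρ) hρ' σ
    intro i B' hget
    simp only [List.getElem?_map] at hget
    cases hgi : Γ[i]? with
    | none => rw [hgi] at hget; simp at hget
    | some B0 =>
      rw [hgi] at hget; simp at hget
      subst hget
      rw [interp_tlift]
      have := interp_ext (A := B0) (ρ := fun n => if n < 0 then consρ S ρ n else consρ S ρ (n+1))
        (ρ' := ρ) (by intro n; simp [consρ])
      rw [this]
      exact hσ i B0 hgi
  | @allE Γ A t G hG _ _ ih =>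
    intro ρ hρ σ hσ
    have hmem := ih ρ hρ σ hσ
    simp only [interpTy, Set.mem_iInter] at hmem
    have hSG : SAT (interpTy G ρ) := interp_sat G ρ hρ
    have hmem2 := hmem (interpTy G ρ) hSG
    rw [interp_tsubst]
    have : (fun n => if n < 0 then ρ n else if n = 0 then interpTy (Ty.tliftTimes 0 G) ρ else ρ (n-1))
        = consρ (interpTy G ρ) ρ := by
      funext n; cases n with
      | zero => simp [consρ]; rfl
      | succ n => simp [consρ]
    rw [this]
    exact hmem2

/-! ### Normality -/

def notLam : Trm → Bool
  | .lam _ => false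
  | _ => true

def isNormal : Trm → Bool
  | .var _ => true
  | .lam u => isNormal u
  | .app u v => notLam u && isNormal u && isNormal v

lemma no_beta_of_isNormal : ∀ {t u : Trm}, Beta t u → isNormal t = true → False := by
  intro t u hb
  induction hb with
  | beta => simp [isNormal, notLam]
  | appL h ih => simp only [isNormal, Bool.and_eq_true]; tauto
  | appR h ih => simp only [isNormal, Bool.and_eq_true]; tauto
  | lam h ih => simp only [isNormal]; tauto

lemma exists_beta_of_not_isNormal : ∀ t : Trm, isNormal t = false → ∃ u, Beta t u := by
  intro t
  induction t with
  | var n => simp [isNormal]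
  | lam u ih =>
    intro h
    obtain ⟨u', hu'⟩ := ih (by simpa [isNormal] using h)
    exact ⟨_, Beta.lam hu'⟩
  | app u v ihu ihv =>
    intro h
    simp only [isNormal, Bool.and_eq_false_iff] at h
    rcases h with (h | h) | h
    · cases u with
      | lam w => exact ⟨_, Beta.beta⟩
      | var n => simp [notLam] at h
      | app a b => simp [notLam] at h
    · obtain ⟨u', hu'⟩ := ihu h
      exact ⟨_, Beta.appL hu'⟩
    · obtain ⟨v', hv'⟩ := ihv h
      exact ⟨_, Beta.appR hv'⟩

lemma isNormal_of_betaNormal {t : Trm} (h : BetaNormal t) : isNormal t = true := by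
  by_contra hc
  obtain ⟨u, hu⟩ := exists_beta_of_not_isNormal t (by simpa using hc)
  exact h u hu

lemma betaNormal_of_isNormal {t : Trm} (h : isNormal t = true) : BetaNormal t :=
  fun u hb => no_beta_of_isNormal hb h

lemma subst_var_shape (n k m : ℕ) : ∃ m', (Trm.var n).subst k (.var m) = .var m' := by
  simp only [Trm.subst]
  split_ifs with h1 h2
  · exact ⟨n, rfl⟩
  · exact ⟨m + k, liftTimes_var k m⟩
  · exact ⟨n - 1, rfl⟩

lemma isNormal_subst_var : ∀ (t : Trm) (k m : ℕ), isNormal t = true →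
    isNormal (t.subst k (.var m)) = true := by
  intro t
  induction t with
  | var n =>
    intro k m _
    obtain ⟨m', hm'⟩ := subst_var_shape n k m
    rw [hm']; rfl
  | lam u ih =>
    intro k m h
    simp only [Trm.subst, isNormal] at *
    exact ih _ _ h
  | app u v ihu ihv =>
    intro k m h
    simp only [isNormal, Bool.and_eq_true] at h
    obtain ⟨⟨hnl, hu⟩, hv⟩ := h
    simp only [Trm.subst, isNormal, Bool.and_eq_true]
    refine ⟨⟨?_, ihu _ _ hu⟩, ihv _ _ hv⟩
    cases u with
    | lam w => simp [notLam] at hnl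
    | var n =>
      obtain ⟨m', hm'⟩ := subst_var_shape n k m
      rw [hm']; rfl
    | app a b => rfl

lemma star_eq_of_normal {t u : Trm} (h : BetaStar t u) (hn : isNormal t = true) : t = u := by
  rcases Relation.ReflTransGen.cases_head h with rfl | ⟨c, hc, _⟩
  · rfl
  · exact absurd hn (by intro h'; exact no_beta_of_isNormal hc h')

lemma isNormal_churchBody (n : ℕ) : isNormal (churchBody n) = true := by
  induction n with
  | zero => rfl
  | succ n ih => simp [churchBody, isNormal, notLam, ih]

/-! ### Free-variable lemmas -/

lemma typing_fv {Γ : List Ty} {t : Trm} {A : Ty} (h : Typing Γ t A) :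
    ∀ n ∈ t.fv, n < Γ.length := by
  induction h with
  | @ax Γ n A hget _ =>
    intro m hm
    simp only [Trm.fv, Set.mem_singleton_iff] at hm
    subst hm
    exact (List.getElem?_eq_some_iff.mp hget).1
  | @arrI Γ A B t _ _ ih =>
    intro m hm
    have := ih (m+1) hm
    simpa using this
  | @arrE Γ A B u v _ _ ihu ihv =>
    intro m hm
    rcases hm with hm | hm
    · exact ihu m hm
    · exact ihv m hm
  | @allI Γ A t _ _ ih =>
    intro m hm
    simpa using ih m hm
  | @allE Γ A t G _ _ _ ih => exact ih

/-! ### The inverse substitution lemma -/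

lemma subst_subst_id : ∀ (a : Trm) (d : ℕ), (∀ n ∈ a.fv, n < d + 2) →
    ((a.subst (d+1) (.var 1)).subst d (.var 0)) = a := by
  intro a
  induction a with
  | var n =>
    intro d h
    have hn : n < d + 2 := h n rfl
    simp only [Trm.subst]
    rcases lt_trichotomy n d with h1 | rfl | h1
    · split_ifs <;> first | omega | (simp only [Trm.subst]; split_ifs <;> first | rfl | omega)
    · split_ifs <;> first | omega | skip
      · simp only [Trm.subst]
        split_ifs <;> first | omega | skip
        rw [liftTimes_var]
        simp
    · have hn1 : n = d + 1 := by omega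
      subst hn1
      split_ifs <;> first | omega | skip
      rw [liftTimes_var]
      simp only [Trm.subst]
      split_ifs <;> first | omega | (congr 1; omega)
  | app u v ihu ihv =>
    intro d h
    simp only [Trm.subst]
    rw [ihu d (fun n hn => h n (Or.inl hn)), ihv d (fun n hn => h n (Or.inr hn))]
  | lam u ih =>
    intro d h
    simp only [Trm.subst]
    rw [ih (d+1)]
    intro n hn
    cases n with
    | zero => omega
    | succ n =>
      have := h n hn
      omega

/-! ### Typing of Church numerals -/

lemma churchBody_typing (n : ℕ) :
    Typing [Ty.arr (.var 0) (.var 0), Ty.var 0] (churchBody n) (.var 0) := by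
  induction n with
  | zero =>
    apply Typing.ax
    · rfl
    · intro B hB
      simp only [List.mem_cons, List.mem_singleton] at hB
      rcases hB with rfl | rfl | h
      · exact ⟨trivial, trivial⟩
      · trivial
      · simp at h
  | succ n ih =>
    refine Typing.arrE ?_ ih
    apply Typing.ax
    · rfl
    · intro B hB
      simp only [List.mem_cons, List.mem_singleton] at hB
      rcases hB with rfl | rfl | h
      · exact ⟨trivial, trivial⟩
      · trivial
      · simp at h

lemma church_typing (n : ℕ) : Typing [] (church n) Ent := by
  apply Typing.allI
  · simp [Ty.tfv]
  · show Typing [] _ _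
    apply Typing.arrI (by simp [Ty.Proper])
    apply Typing.arrI (by simp [Ty.Proper])
    exact churchBody_typing n

/-! ### The candidate set -/

def S0 : Set Trm := {u | ∃ n : ℕ, BetaStar u (churchBody n)}

lemma S0_sat : SAT S0 := by
  intro t u hb ⟨n, hn⟩
  exact ⟨n, Relation.ReflTransGen.head hb hn⟩

lemma betaStar_appR {u v v' : Trm} (h : BetaStar v v') :
    BetaStar (.app u v) (.app u v') := by
  induction h with
  | refl => exact Relation.ReflTransGen.refl
  | tail _ hstep ih => exact Relation.ReflTransGen.tail ih (Beta.appR hstep)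

/-! ### Closed normal terms are lambdas -/

lemma closed_normal_lam : ∀ t : Trm, isNormal t = true → t.fv = ∅ → ∃ u, t = .lam u := by
  intro t
  induction t with
  | var n =>
    intro _ hfv
    exact absurd (Set.eq_empty_iff_forall_notMem.mp hfv n) (by simp [Trm.fv])
  | lam u ih => intro _ _; exact ⟨u, rfl⟩
  | app u v ihu ihv =>
    intro hn hfv
    simp only [isNormal, Bool.and_eq_true] at hn
    obtain ⟨⟨hnl, hu⟩, _⟩ := hn
    have hfvu : u.fv = ∅ := by
      have : u.fv ∪ v.fv = ∅ := hfv
      rw [Set.union_empty_iff] at this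
      exact this.1
    obtain ⟨w, rfl⟩ := ihu hu hfvu
    simp [notLam] at hnl

/-! ### Step inversion lemmas -/

lemma step1 {u Z : Trm} (hu : isNormal u = true)
    (h : Beta (.app (.app (.lam u) (.var 1)) (.var 0)) Z) :
    Z = .app (u.subst 0 (.var 1)) (.var 0) := by
  cases h with
  | appL h' =>
    cases h' with
    | beta => rfl
    | appL h'' =>
      cases h'' with
      | lam h3 => exact absurd hu (by intro hh; exact no_beta_of_isNormal h3 hh)
    | appR h'' => cases h''
  | appR h' => cases h'

lemma step2 {w Z : Trm} (hw : isNormal w = true)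
    (h : Beta (.app (.lam w) (.var 0)) Z) :
    Z = w.subst 0 (.var 0) := by
  cases h with
  | beta => rfl
  | appL h' =>
    cases h' with
    | lam h3 => exact absurd hw (by intro hh; exact no_beta_of_isNormal h3 hh)
  | appR h' => cases h'

lemma churchBody_not_app_app (n : ℕ) (a b c : Trm) :
    churchBody n ≠ .app (.app a b) c := by
  cases n <;> simp [churchBody]

lemma churchBody_not_app_lam (n : ℕ) (a c : Trm) :
    churchBody n ≠ .app (.lam a) c := by
  cases n <;> simp [churchBody]

end StmtAux
/-- for β-normal t, ⊢_F t : Ent iff t is a Church numeral. -/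
theorem stmt7 (t : Trm) (hn : BetaNormal t) :
    Typing [] t Ent ↔ ∃ n : ℕ, t = church n := by
  constructor
  · intro h
    classical
    have hfv : t.fv = ∅ := by
      apply Set.eq_empty_iff_forall_notMem.mpr
      intro n hn'
      have := StmtAux.typing_fv h n hn'
      simp at this
    have hnt : StmtAux.isNormal t = true := StmtAux.isNormal_of_betaNormal hn
    -- realizability: t applied to x and f reduces to a church body
    have hred : ∃ n, BetaStar (.app (.app t (.var 1)) (.var 0)) (churchBody n) := by
      set ρ0 : ℕ → Set Trm := fun _ => StmtAux.S0 with hρ0def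
      have hρsat : ∀ n, StmtAux.SAT (ρ0 n) := fun _ => StmtAux.S0_sat
      have hσ : ∀ i B, ([] : List Ty)[i]? = some B →
          (fun n => Trm.var n) i ∈ StmtAux.interpTy B ρ0 := by
        intro i B hB; simp at hB
      have hmem := StmtAux.sound h ρ0 hρsat _ hσ
      rw [StmtAux.msubst_id] at hmem
      simp only [Ent, StmtAux.interpTy, Set.mem_iInter] at hmem
      have hmem2 := hmem StmtAux.S0 StmtAux.S0_sat
      simp only [StmtAux.interpTy, Set.mem_setOf_eq] at hmem2
      have hx : Trm.var 1 ∈ StmtAux.consρ StmtAux.S0 ρ0 0 :=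
        ⟨0, Relation.ReflTransGen.refl⟩
      have hf : ∀ w ∈ StmtAux.consρ StmtAux.S0 ρ0 0,
          Trm.app (.var 0) w ∈ StmtAux.consρ StmtAux.S0 ρ0 0 := by
        rintro w ⟨n, hn'⟩
        exact ⟨n + 1, StmtAux.betaStar_appR hn'⟩
      exact hmem2 _ hx _ hf
    obtain ⟨u, rfl⟩ := StmtAux.closed_normal_lam t hnt hfv
    have hfvu : ∀ n ∈ u.fv, n = 0 := by
      intro n hn'
      cases n with
      | zero => rfl
      | succ m =>
        exfalso
        have hm : m ∈ (Trm.lam u).fv := hn'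
        rw [hfv] at hm
        exact hm
    have hu : StmtAux.isNormal u = true := hnt
    obtain ⟨n, hstar⟩ := hred
    rcases Relation.ReflTransGen.cases_head hstar with heq | ⟨Z, hZ, hstar2⟩
    · exact absurd heq.symm (StmtAux.churchBody_not_app_app n _ _ _)
    · rw [StmtAux.step1 hu hZ] at hstar2
      cases u with
      | var m =>
        exfalso
        have hm : m = 0 := hfvu m rfl
        subst hm
        have hsub : (Trm.var 0).subst 0 (.var 1) = .var 1 := by
          simp [Trm.subst, Trm.liftTimes]
        rw [hsub] at hstar2
        have hZn : Trm.app (.var 1) (.var 0) = churchBody n :=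
          StmtAux.star_eq_of_normal hstar2 rfl
        cases n <;> simp [churchBody] at hZn
      | app p q =>
        exfalso
        have hZnorm : StmtAux.isNormal (Trm.app ((Trm.app p q).subst 0 (.var 1)) (.var 0)) = true := by
          have h1 := StmtAux.isNormal_subst_var (Trm.app p q) 0 1 hu
          simp only [Trm.subst] at h1 ⊢
          simp [StmtAux.isNormal, StmtAux.notLam] at h1 ⊢
          tauto
        have hZn := StmtAux.star_eq_of_normal hstar2 hZnorm
        simp only [Trm.subst] at hZn
        exact StmtAux.churchBody_not_app_app n _ _ _ hZn.symm
      | lam a =>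
        have ha : StmtAux.isNormal a = true := hu
        have hsub : (Trm.lam a).subst 0 (.var 1) = .lam (a.subst 1 (.var 1)) := rfl
        rw [hsub] at hstar2
        have hw : StmtAux.isNormal (a.subst 1 (.var 1)) = true :=
          StmtAux.isNormal_subst_var a 1 1 ha
        rcases Relation.ReflTransGen.cases_head hstar2 with heq2 | ⟨Z2, hZ2, hstar3⟩
        · exact absurd heq2.symm (StmtAux.churchBody_not_app_lam n _ _)
        · rw [StmtAux.step2 hw hZ2] at hstar3
          have hfva : ∀ m ∈ a.fv, m < 2 := by
            intro m hm
            cases m with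
            | zero => omega
            | succ k =>
              have : k ∈ (Trm.lam a).fv := hm
              have := hfvu k this
              omega
          have hid : ((a.subst 1 (.var 1)).subst 0 (.var 0)) = a := by
            have := StmtAux.subst_subst_id a 0 (by simpa using hfva)
            simpa using this
          rw [hid] at hstar3
          have : a = churchBody n := StmtAux.star_eq_of_normal hstar3 ha
          exact ⟨n, by rw [this]; rfl⟩
  · rintro ⟨n, rfl⟩
    exact StmtAux.church_typing n
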